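/- Let H : [0,∞) → ℝ be Lebesgue integrable, nonnegative, nonzero in L^1((0,∞)), with t ↦ (H(t)-H(0))/t bounded near 0. Define ψ_H(s) = ∫_0^∞ ( H(0) e^{-t}/t - H(t) e^{-st}/(1-e^{-t}) ) dt. Then for every integer n ≥ 0, the quadratic form q_n^H(x_0,...,x_n) = ∑_{0≤i,j≤n} x_i x_j ψ_H(|i-j|) is negative definite on the subspace of ℝ^{n+1} where H(0)·∑_i x_i = 0. -/

import Mathlib

open MeasureTheory Set Finset

noncomputable def Tr (r : ℝ) (n : ℕ) (x : ℕ → ℝ) : ℝ := ∑ i ∈ range n, x i * r ^ i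

noncomputable def Sr (r : ℝ) : ℕ → (ℕ → ℝ) → ℝ
  | 0, _ => 0
  | n+1, x => (Tr r n (fun i => x (i+1)))^2 + Sr r n (fun i => x (i+1))

noncomputable def Qr (r : ℝ) (n : ℕ) (x : ℕ → ℝ) : ℝ :=
  ∑ i ∈ range n, ∑ j ∈ range n, x i * x j * r ^ ((i : ℤ) - j).natAbs

lemma Tr_succ (r : ℝ) (n : ℕ) (x : ℕ → ℝ) :
    Tr r (n+1) x = x 0 + r * Tr r n (fun i => x (i+1)) := by
  rw [Tr, Finset.sum_range_succ', Tr, Finset.mul_sum]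
  rw [add_comm]
  congr 1
  · simp
  · exact Finset.sum_congr rfl (fun i _ => by ring)

lemma natAbs_succ_sub_succ (i j : ℕ) : (((i+1 : ℕ) : ℤ) - ((j+1 : ℕ))).natAbs = ((i : ℤ) - j).natAbs := by
  omega

lemma Qr_succ (r : ℝ) (n : ℕ) (x : ℕ → ℝ) :
    Qr r (n+1) x = Qr r n (fun i => x (i+1)) + x 0 ^ 2
      + 2 * x 0 * r * Tr r n (fun i => x (i+1)) := by
  rw [Qr, Finset.sum_range_succ']
  have h1 : ∀ i ∈ range n, (∑ j ∈ range (n+1), x (i+1) * x j * r ^ (((i+1 : ℕ) : ℤ) - j).natAbs)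
      = (∑ j ∈ range n, x (i+1) * x (j+1) * r ^ ((i : ℤ) - j).natAbs)
        + x (i+1) * x 0 * r ^ (i+1) := by
    intro i _
    rw [Finset.sum_range_succ']
    congr 1
    apply Finset.sum_congr rfl
    intro j _
    rw [natAbs_succ_sub_succ]
  rw [Finset.sum_congr rfl h1, Finset.sum_add_distrib]
  have h2 : (∑ j ∈ range (n+1), x 0 * x j * r ^ (((0:ℕ) : ℤ) - j).natAbs)
      = (∑ j ∈ range n, x 0 * x (j+1) * r ^ (j+1)) + x 0 ^ 2 := by
    rw [Finset.sum_range_succ']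
    congr 1
    all_goals try (apply Finset.sum_congr rfl; intro j _; congr 2; omega)
    all_goals simp [sq]
  rw [h2, Qr]
  have h3 : (∑ i ∈ range n, x (i+1) * x 0 * r ^ (i+1))
      = x 0 * r * Tr r n (fun i => x (i+1)) := by
    rw [Tr, Finset.mul_sum]
    apply Finset.sum_congr rfl
    intro i _
    ring
  have h4 : (∑ j ∈ range n, x 0 * x (j+1) * r ^ (j+1))
      = x 0 * r * Tr r n (fun i => x (i+1)) := by
    rw [Tr, Finset.mul_sum]
    apply Finset.sum_congr rfl
    intro i _
    ring
  rw [h3, h4]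
  ring

lemma Qr_eq (r : ℝ) (n : ℕ) (x : ℕ → ℝ) :
    Qr r n x = (Tr r n x)^2 + (1 - r^2) * Sr r n x := by
  induction n generalizing x with
  | zero => simp [Qr, Tr, Sr]
  | succ n ih =>
    rw [Qr_succ, Tr_succ, Sr, ih]
    ring

lemma Sr_nonneg (r : ℝ) (n : ℕ) (x : ℕ → ℝ) : 0 ≤ Sr r n x := by
  induction n generalizing x with
  | zero => simp [Sr]
  | succ n ih => exact add_nonneg (sq_nonneg _) (ih _)

lemma Qr_nonneg (r : ℝ) (hr : r^2 ≤ 1) (n : ℕ) (x : ℕ → ℝ) : 0 ≤ Qr r n x := by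
  rw [Qr_eq]
  have := Sr_nonneg r n x
  nlinarith [sq_nonneg (Tr r n x)]

lemma eq_zero_of_Tr_Sr (r : ℝ) (n : ℕ) (x : ℕ → ℝ)
    (hT : Tr r n x = 0) (hS : Sr r n x = 0) : ∀ i < n, x i = 0 := by
  induction n generalizing x with
  | zero => intro i hi; omega
  | succ n ih =>
    rw [Sr] at hS
    have h1 : Tr r n (fun i => x (i+1)) = 0 ∧ Sr r n (fun i => x (i+1)) = 0 := by
      have := Sr_nonneg r n (fun i => x (i+1))
      constructor <;> nlinarith [sq_nonneg (Tr r n (fun i => x (i+1)))]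
    have htail := ih _ h1.1 h1.2
    have hx0 : x 0 = 0 := by
      rw [Tr_succ, h1.1] at hT; linarith [hT]
    intro i hi
    match i with
    | 0 => exact hx0
    | k+1 => exact htail k (by omega)

lemma Qr_pos (r : ℝ) (hr : r^2 < 1) (n : ℕ) (x : ℕ → ℝ)
    (hx : ∃ i < n, x i ≠ 0) : 0 < Qr r n x := by
  rcases lt_or_eq_of_le (Qr_nonneg r hr.le n x) with h | h
  · exact h
  · exfalso
    rw [Qr_eq] at h
    have hS := Sr_nonneg r n x
    have hT : Tr r n x = 0 := by nlinarith [sq_nonneg (Tr r n x)]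
    have hS0 : Sr r n x = 0 := by nlinarith [sq_nonneg (Tr r n x)]
    obtain ⟨i, hi, hxi⟩ := hx
    exact hxi (eq_zero_of_Tr_Sr r n x hT hS0 i hi)

lemma one_sub_exp_le (t : ℝ) : 1 - Real.exp (-t) ≤ t := by
  nlinarith [Real.add_one_le_exp (-t)]

lemma mul_exp_le_one_sub (t : ℝ) : t * Real.exp (-t) ≤ 1 - Real.exp (-t) := by
  have h := Real.add_one_le_exp t
  have he : 0 < Real.exp (-t) := Real.exp_pos _
  have h2 : Real.exp t * Real.exp (-t) = 1 := by rw [← Real.exp_add]; simp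
  nlinarith

lemma exp_third (t : ℝ) (ht : t ≤ 1) : (1:ℝ)/3 ≤ Real.exp (-t) := by
  have h1 : Real.exp (-1 : ℝ) ≤ Real.exp (-t) := Real.exp_le_exp.mpr (by linarith)
  have h2 : Real.exp (1:ℝ) < 3 := by
    have := Real.exp_one_lt_d9
    linarith
  have h3 : Real.exp (1:ℝ) * Real.exp (-1:ℝ) = 1 := by rw [← Real.exp_add]; simp
  have h4 : 0 < Real.exp (-1:ℝ) := Real.exp_pos _
  nlinarith

lemma aesm_aux (H : ℝ → ℝ) (hInt : IntegrableOn H (Ici 0)) (s : ℝ)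
    (S : Set ℝ) (hS : S ⊆ Ici 0) :
    AEStronglyMeasurable
      (fun t => H 0 * Real.exp (-t) / t - H t * Real.exp (-(s * t)) / (1 - Real.exp (-t)))
      (volume.restrict S) := by
  have hH : AEStronglyMeasurable H (volume.restrict S) :=
    hInt.aestronglyMeasurable.mono_measure (Measure.restrict_mono hS le_rfl)
  have m1 : Measurable (fun t : ℝ => H 0 * Real.exp (-t) / t) :=
    (measurable_const.mul (Real.measurable_exp.comp measurable_neg)).div measurable_id
  have m2 : Measurable (fun t : ℝ => Real.exp (-(s * t)) / (1 - Real.exp (-t))) :=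
    (Real.measurable_exp.comp (measurable_const.mul measurable_id).neg).div
      (measurable_const.sub (Real.measurable_exp.comp measurable_neg))
  have : AEStronglyMeasurable (fun t => H t * (Real.exp (-(s * t)) / (1 - Real.exp (-t))))
      (volume.restrict S) := hH.mul m2.aestronglyMeasurable
  refine m1.aestronglyMeasurable.sub (this.congr ?_)
  filter_upwards with t
  ring

set_option maxHeartbeats 1000000 in
lemma integrable_aux (H : ℝ → ℝ)
    (hInt : IntegrableOn H (Ici 0))
    (hbd : ∃ ε > (0 : ℝ), ∃ C : ℝ, ∀ t ∈ Ioo (0 : ℝ) ε, |(H t - H 0) / t| ≤ C)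
    (s : ℝ) (hs : 0 ≤ s) :
    IntegrableOn
      (fun t => H 0 * Real.exp (-t) / t - H t * Real.exp (-(s * t)) / (1 - Real.exp (-t)))
      (Ioi 0) := by
  obtain ⟨ε, hε, C, hC⟩ := hbd
  set a : ℝ := min (ε/2) 1 with ha_def
  have ha : 0 < a := lt_min (by linarith) one_pos
  have haε : a < ε := lt_of_le_of_lt (min_le_left _ _) (by linarith)
  have ha1 : a ≤ 1 := min_le_right _ _
  clear_value a
  have hC0 : 0 ≤ C := le_trans (abs_nonneg _) (hC (a/2) ⟨by linarith, by linarith⟩)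
  have key : Set.Ioc (0:ℝ) a ∪ Set.Ioi a = Set.Ioi 0 := Set.Ioc_union_Ioi_eq_Ioi ha.le
  rw [← key]
  apply IntegrableOn.union
  · -- on Ioc 0 a
    refine Integrable.mono' (g := fun _ => 3 * (2 * |H 0| + s * |H 0| + C))
      ((integrableOn_const_iff).mpr (Or.inr measure_Ioc_lt_top))
      (aesm_aux H hInt s _ (fun t ht => le_of_lt ht.1))
      ?_
    filter_upwards [ae_restrict_mem measurableSet_Ioc] with t ht
    obtain ⟨ht0, hta⟩ := ht
    have ht1 : t ≤ 1 := hta.trans ha1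
    have htε : t < ε := lt_of_le_of_lt hta haε
    set r := Real.exp (-t) with hr
    set D := 1 - r with hD
    set E := Real.exp (-(s * t)) with hE
    clear_value r D E
    have hr0 : 0 < r := hr ▸ Real.exp_pos _
    have hr1 : r < 1 := by
      rw [hr]
      calc Real.exp (-t) < Real.exp 0 := Real.exp_lt_exp.mpr (by linarith)
        _ = 1 := Real.exp_zero
    have hrle : (1:ℝ)/3 ≤ r := by rw [hr]; exact exp_third t ht1
    have hD0 : 0 < D := by rw [hD]; linarith
    have hDt : D ≤ t := by rw [hD, hr]; exact one_sub_exp_le t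
    have htrD : t * r ≤ D := by rw [hD, hr]; exact mul_exp_le_one_sub t
    have hrt : 1 - t ≤ r := by rw [hr]; nlinarith [Real.add_one_le_exp (-t)]
    have hE0 : 0 < E := by rw [hE]; exact Real.exp_pos _
    have hE1 : E ≤ 1 := by
      rw [hE]; calc Real.exp (-(s*t)) ≤ Real.exp 0 := Real.exp_le_exp.mpr (by nlinarith)
        _ = 1 := Real.exp_zero
    have hEst : 1 - E ≤ s * t := by
      rw [hE]
      have := one_sub_exp_le (s * t)
      linarith
    have ht0' : t ≠ 0 := ne_of_gt ht0
    have hD0' : D ≠ 0 := ne_of_gt hD0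
    -- rewrite f t as N / (t * D)
    set N := H 0 * (r * D - t) + H 0 * t * (1 - E) + (H 0 - H t) * (E * t) with hN
    have hft : H 0 * r / t - H t * E / D = N / (t * D) := by
      field_simp
      ring
    rw [Real.norm_eq_abs, hft, abs_div, abs_of_pos (mul_pos ht0 hD0)]
    rw [div_le_iff₀ (mul_pos ht0 hD0)]
    -- bound |N|
    have hnum : |r * D - t| ≤ 2 * t^2 := by
      rw [abs_le]
      constructor
      · nlinarith
      · nlinarith
    have hHt : |H t - H 0| ≤ C * t := by
      have := hC t ⟨ht0, htε⟩
      rw [abs_div, abs_of_pos ht0, div_le_iff₀ ht0] at this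
      linarith
    have hNle : |N| ≤ t^2 * (2 * |H 0| + s * |H 0| + C) := by
      have h1 : |N| ≤ |H 0| * |r * D - t| + |H 0| * (t * (1 - E)) + |H 0 - H t| * (E * t) := by
        rw [hN]
        calc |H 0 * (r * D - t) + H 0 * t * (1 - E) + (H 0 - H t) * (E * t)|
            ≤ |H 0 * (r * D - t) + H 0 * t * (1 - E)| + |(H 0 - H t) * (E * t)| := abs_add_le _ _
          _ ≤ |H 0 * (r * D - t)| + |H 0 * t * (1 - E)| + |(H 0 - H t) * (E * t)| := by
              have := abs_add_le (H 0 * (r * D - t)) (H 0 * t * (1 - E))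
              linarith
          _ = |H 0| * |r * D - t| + |H 0| * (t * (1 - E)) + |H 0 - H t| * (E * t) := by
              rw [abs_mul, abs_mul, abs_mul, abs_mul]
              rw [abs_of_pos ht0, abs_of_nonneg (by linarith : (0:ℝ) ≤ 1 - E),
                abs_of_nonneg (by positivity : (0:ℝ) ≤ E * t)]
              ring
      have h2 : |H 0 - H t| = |H t - H 0| := abs_sub_comm _ _
      have h3 : |H 0| * (t * (1 - E)) ≤ |H 0| * (t * (s * t)) := by
        apply mul_le_mul_of_nonneg_left _ (abs_nonneg _)
        apply mul_le_mul_of_nonneg_left hEst ht0.le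
      have h4 : |H 0 - H t| * (E * t) ≤ (C * t) * t := by
        rw [h2]
        apply mul_le_mul hHt _ (by positivity) (by positivity)
        nlinarith
      have hb1 : |H 0| * |r * D - t| ≤ |H 0| * (2 * t^2) :=
        mul_le_mul_of_nonneg_left hnum (abs_nonneg _)
      have e1 : |H 0| * (2*t^2) + |H 0| * (t*(s*t)) + C*t*t = t^2 * (2*|H 0| + s*|H 0| + C) := by
        ring
      linarith [h1, hb1, h3, h4, e1]
    have htD : t^2 / 3 ≤ t * D := by
      have k1 : t*(t*r) ≤ t*D := mul_le_mul_of_nonneg_left htrD ht0.le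
      have k2 : t^2*(1/3) ≤ t^2*r := mul_le_mul_of_nonneg_left hrle (sq_nonneg t)
      have k3 : t^2*r = t*(t*r) := by ring
      linarith
    have hM0 : 0 ≤ 2*|H 0| + s*|H 0| + C := by
      have := mul_nonneg hs (abs_nonneg (H 0))
      linarith [abs_nonneg (H 0)]
    calc |N| ≤ t^2 * (2*|H 0| + s*|H 0| + C) := hNle
      _ = 3 * (2*|H 0| + s*|H 0| + C) * (t^2/3) := by ring
      _ ≤ 3 * (2*|H 0| + s*|H 0| + C) * (t * D) := by
          apply mul_le_mul_of_nonneg_left htD (by linarith)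
  · -- on Ioi a
    have hsub : Set.Ioi a ⊆ Set.Ici (0:ℝ) := fun t ht => le_of_lt (lt_of_lt_of_le ha (le_of_lt ht))
    have h1 : IntegrableOn (fun t => H 0 * Real.exp (-t) / t) (Ioi a) := by
      refine Integrable.mono' (g := fun t => (|H 0| / a) * Real.exp (-t))
        ?_ ?_ ?_
      · have h := (exp_neg_integrableOn_Ioi a one_pos).const_mul (|H 0| / a)
        simpa [neg_one_mul] using h
      · exact ((measurable_const.mul (Real.measurable_exp.comp measurable_neg)).div
          measurable_id).aestronglyMeasurable
      · filter_upwards [ae_restrict_mem measurableSet_Ioi] with t ht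
        rw [Real.norm_eq_abs, abs_div, abs_mul, abs_of_pos (Real.exp_pos _),
          abs_of_pos (lt_trans ha ht)]
        rw [div_le_iff₀ (lt_trans ha ht)]
        have : |H 0| / a * Real.exp (-t) * t = (|H 0| * Real.exp (-t)) * (t / a) := by ring
        rw [this]
        have h2 : (1:ℝ) ≤ t / a := (one_le_div ha).mpr (le_of_lt ht)
        exact le_mul_of_one_le_right (by positivity) h2
    have h2 : IntegrableOn (fun t => H t * Real.exp (-(s * t)) / (1 - Real.exp (-t))) (Set.Ioi a) := by
      have hDa : 0 < 1 - Real.exp (-a) := by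
        have h : Real.exp (-a) < 1 := by
          calc Real.exp (-a) < Real.exp 0 := Real.exp_lt_exp.mpr (by linarith)
            _ = 1 := Real.exp_zero
        linarith
      refine Integrable.mono' (g := fun t => (1 - Real.exp (-a))⁻¹ * |H t|) ?_ ?_ ?_
      · exact ((hInt.mono_set hsub).norm.const_mul _).congr
          (by filter_upwards with t; rw [Real.norm_eq_abs])
      · have hH : AEStronglyMeasurable H (volume.restrict (Set.Ioi a)) :=
          hInt.aestronglyMeasurable.mono_measure (Measure.restrict_mono hsub le_rfl)
        have m2 : Measurable (fun t : ℝ => Real.exp (-(s * t)) / (1 - Real.exp (-t))) :=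
          (Real.measurable_exp.comp (measurable_const.mul measurable_id).neg).div
            (measurable_const.sub (Real.measurable_exp.comp measurable_neg))
        exact (hH.mul m2.aestronglyMeasurable).congr
          (by filter_upwards with t; show H t * _ = _; ring)
      · filter_upwards [ae_restrict_mem measurableSet_Ioi] with t ht
        have hat : a < t := ht
        have hDt : 1 - Real.exp (-a) ≤ 1 - Real.exp (-t) := by
          have h : Real.exp (-t) ≤ Real.exp (-a) := Real.exp_le_exp.mpr (by linarith)
          linarith
        have hD0 : 0 < 1 - Real.exp (-t) := lt_of_lt_of_le hDa hDt
        have hE1 : Real.exp (-(s*t)) ≤ 1 := by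
          calc Real.exp (-(s*t)) ≤ Real.exp 0 := Real.exp_le_exp.mpr (by nlinarith [ha.trans hat])
            _ = 1 := Real.exp_zero
        rw [Real.norm_eq_abs, abs_div, abs_mul, abs_of_pos hD0]
        rw [div_le_iff₀ hD0]
        have h3 : (1:ℝ) ≤ (1 - Real.exp (-t)) / (1 - Real.exp (-a)) := (one_le_div hDa).mpr hDt
        calc |H t| * |Real.exp (-(s*t))| ≤ |H t| * 1 := by
              apply mul_le_mul_of_nonneg_left _ (abs_nonneg _)
              rw [abs_of_pos (Real.exp_pos _)]
              exact hE1
          _ = |H t| := mul_one _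
          _ ≤ |H t| * ((1 - Real.exp (-t)) / (1 - Real.exp (-a))) := by
              exact le_mul_of_one_le_right (abs_nonneg _) h3
          _ = (1 - Real.exp (-a))⁻¹ * |H t| * (1 - Real.exp (-t)) := by ring
    exact h1.sub h2

/-- The real-valued function `ψ_H`. -/
noncomputable def psiH (H : ℝ → ℝ) (s : ℝ) : ℝ :=
  ∫ t in Ioi (0 : ℝ),
    (H 0 * Real.exp (-t) / t - H t * Real.exp (-(s * t)) / (1 - Real.exp (-t)))

/-- The quadratic form `q_n^H`. -/
noncomputable def qH (H : ℝ → ℝ) (n : ℕ) (x : Fin (n + 1) → ℝ) : ℝ :=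
  ∑ i, ∑ j, x i * x j * psiH H |(i.1 : ℝ) - (j.1 : ℝ)|

set_option maxHeartbeats 1000000 in
theorem stmt_6 (H : ℝ → ℝ)
    (hInt : IntegrableOn H (Ici 0))
    (hpos : ∀ t, 0 ≤ t → 0 ≤ H t)
    (hne : ¬ (∀ᵐ t ∂(volume.restrict (Ioi (0 : ℝ))), H t = 0))
    (hbd : ∃ ε > (0 : ℝ), ∃ C : ℝ, ∀ t ∈ Ioo (0 : ℝ) ε, |(H t - H 0) / t| ≤ C)
    (n : ℕ) (x : Fin (n + 1) → ℝ)
    (hx : H 0 * ∑ i, x i = 0) (hx0 : x ≠ 0) :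
    qH H n x < 0 := by
  classical
  set f : Fin (n+1) → Fin (n+1) → ℝ → ℝ := fun i j t =>
    H 0 * Real.exp (-t) / t
      - H t * Real.exp (-(|(i.1 : ℝ) - (j.1 : ℝ)| * t)) / (1 - Real.exp (-t)) with hf
  have hfint : ∀ i j : Fin (n+1), IntegrableOn (f i j) (Ioi 0) :=
    fun i j => integrable_aux H hInt hbd _ (abs_nonneg _)
  have hcint : ∀ i j : Fin (n+1),
      Integrable (fun t => (x i * x j) * f i j t) (volume.restrict (Ioi (0:ℝ))) :=
    fun i j => (hfint i j).const_mul _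
  set G : ℝ → ℝ := fun t => ∑ i, ∑ j, (x i * x j) * f i j t with hGdef
  have hGint : IntegrableOn G (Ioi 0) :=
    integrable_finset_sum _ (fun i _ => integrable_finset_sum _ (fun j _ => hcint i j))
  have hq : qH H n x = ∫ t in Ioi (0:ℝ), G t := by
    rw [hGdef]
    calc qH H n x = ∑ i, ∑ j, ∫ t in Ioi (0:ℝ), (x i * x j) * f i j t := by
          rw [qH]
          refine Finset.sum_congr rfl fun i _ => Finset.sum_congr rfl fun j _ => ?_
          rw [integral_const_mul]
          rfl
      _ = ∑ i, ∫ t in Ioi (0:ℝ), ∑ j, (x i * x j) * f i j t := by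
          refine Finset.sum_congr rfl fun i _ => ?_
          rw [integral_finset_sum _ (fun j _ => hcint i j)]
      _ = ∫ t in Ioi (0:ℝ), ∑ i, ∑ j, (x i * x j) * f i j t := by
          rw [integral_finset_sum _
            (fun i _ => integrable_finset_sum _ (fun j _ => hcint i j))]
  -- the kernel K
  set K : ℝ → ℝ := fun t => ∑ i : Fin (n+1), ∑ j : Fin (n+1),
    x i * x j * Real.exp (-t) ^ ((i.1 : ℤ) - (j.1 : ℤ)).natAbs with hKdef
  -- K is positive
  set y : ℕ → ℝ := fun k => if h : k < n+1 then x ⟨k, h⟩ else 0 with hydef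
  have hKQ : ∀ t : ℝ, K t = Qr (Real.exp (-t)) (n+1) y := by
    intro t
    rw [hKdef, Qr]
    rw [← Fin.sum_univ_eq_sum_range]
    refine Finset.sum_congr rfl fun i _ => ?_
    rw [← Fin.sum_univ_eq_sum_range]
    refine Finset.sum_congr rfl fun j _ => ?_
    simp [hydef, i.isLt, j.isLt, i.is_le, j.is_le]
  have hKpos : ∀ t : ℝ, 0 < t → 0 < K t := by
    intro t ht
    rw [hKQ]
    have hr0 : 0 < Real.exp (-t) := Real.exp_pos _
    have hr1 : Real.exp (-t) < 1 := by
      calc Real.exp (-t) < Real.exp 0 := Real.exp_lt_exp.mpr (by linarith)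
        _ = 1 := Real.exp_zero
    refine Qr_pos _ (by nlinarith) _ _ ?_
    obtain ⟨i, hxi⟩ := Function.ne_iff.mp hx0
    exact ⟨i.1, i.isLt, by simpa [hydef, i.isLt, i.is_le] using hxi⟩
  -- pointwise identity
  have hGK : ∀ t ∈ Ioi (0:ℝ), G t = -(H t * K t / (1 - Real.exp (-t))) := by
    intro t ht
    have ht0 : (0:ℝ) < t := ht
    have e1 : ∀ i j : Fin (n+1), (x i * x j) * f i j t
        = (x i * x j) * (H 0 * Real.exp (-t) / t)
          - (H t / (1 - Real.exp (-t)))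
            * (x i * x j * Real.exp (-t) ^ ((i.1 : ℤ) - (j.1 : ℤ)).natAbs) := by
      intro i j
      have habs : |(i.1 : ℝ) - (j.1 : ℝ)| = (((i.1 : ℤ) - (j.1 : ℤ)).natAbs : ℝ) := by
        rw [Nat.cast_natAbs]
        push_cast
        ring_nf
      have hexp : Real.exp (-(|(i.1 : ℝ) - (j.1 : ℝ)| * t))
          = Real.exp (-t) ^ ((i.1 : ℤ) - (j.1 : ℤ)).natAbs := by
        rw [habs, ← Real.exp_nat_mul]
        congr 1
        ring
      rw [hf]
      simp only
      rw [hexp]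
      ring
    rw [hGdef]
    simp only
    rw [Finset.sum_congr rfl (fun i _ => Finset.sum_congr rfl (fun j _ => e1 i j))]
    rw [Finset.sum_congr rfl (fun i _ => Finset.sum_sub_distrib _ _), Finset.sum_sub_distrib]
    have hsum1 : ∑ i : Fin (n+1), ∑ j : Fin (n+1), (x i * x j) * (H 0 * Real.exp (-t) / t)
        = (∑ i, x i) * (∑ i, x i) * (H 0 * Real.exp (-t) / t) := by
      rw [Finset.sum_mul_sum, Finset.sum_mul]
      exact Finset.sum_congr rfl fun i _ => (Finset.sum_mul _ _ _).symm
    have hsum2 : ∑ i : Fin (n+1), ∑ j : Fin (n+1),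
        (H t / (1 - Real.exp (-t))) * (x i * x j * Real.exp (-t) ^ ((i.1 : ℤ) - (j.1 : ℤ)).natAbs)
        = (H t / (1 - Real.exp (-t))) * K t := by
      simp only [hKdef]
      rw [Finset.mul_sum]
      exact Finset.sum_congr rfl fun i _ => (Finset.mul_sum _ _ _).symm
    rw [hsum1, hsum2]
    have hzero : (∑ i, x i) * (∑ i, x i) * (H 0 * Real.exp (-t) / t)
        = (H 0 * ∑ i, x i) * ((∑ i, x i) * (Real.exp (-t) / t)) := by ring
    rw [hzero, hx, zero_mul]
    ring
  -- define g
  set g : ℝ → ℝ := fun t => H t * K t / (1 - Real.exp (-t)) with hgdef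
  have hGg : G =ᵐ[volume.restrict (Ioi (0:ℝ))] fun t => -g t := by
    filter_upwards [ae_restrict_mem measurableSet_Ioi] with t ht
    exact hGK t ht
  have hgint : IntegrableOn g (Ioi 0) := by
    have h2 : IntegrableOn (fun t => -g t) (Ioi 0) := hGint.congr hGg
    refine h2.neg.congr ?_
    filter_upwards with t
    simp
  have hq2 : qH H n x = -∫ t in Ioi (0:ℝ), g t := by
    rw [hq, integral_congr_ae hGg, integral_neg]
  have hg0 : 0 ≤ᵐ[volume.restrict (Ioi (0:ℝ))] g := by
    filter_upwards [ae_restrict_mem measurableSet_Ioi] with t ht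
    have ht0 : (0:ℝ) < t := ht
    have hD : 0 < 1 - Real.exp (-t) := by
      have : Real.exp (-t) < 1 := by
        calc Real.exp (-t) < Real.exp 0 := Real.exp_lt_exp.mpr (by linarith)
          _ = 1 := Real.exp_zero
      linarith
    exact div_nonneg (mul_nonneg (hpos t ht0.le) (hKpos t ht0).le) hD.le
  have hpos_int : 0 < ∫ t in Ioi (0:ℝ), g t := by
    rcases lt_or_eq_of_le (integral_nonneg_of_ae hg0) with h | h
    · exact h
    · exfalso
      apply hne
      have hzero : g =ᵐ[volume.restrict (Ioi (0:ℝ))] 0 :=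
        (integral_eq_zero_iff_of_nonneg_ae hg0 hgint).mp h.symm
      filter_upwards [hzero, ae_restrict_mem measurableSet_Ioi] with t hgt ht
      have ht0 : (0:ℝ) < t := ht
      have hD : 0 < 1 - Real.exp (-t) := by
        have : Real.exp (-t) < 1 := by
          calc Real.exp (-t) < Real.exp 0 := Real.exp_lt_exp.mpr (by linarith)
            _ = 1 := Real.exp_zero
        linarith
      have hKt := hKpos t ht0
      have : H t * K t / (1 - Real.exp (-t)) = 0 := hgt
      have h2 : H t * K t = 0 := by
        field_simp at this
        simpa using this
      rcases mul_eq_zero.mp h2 with h3 | h3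
      · exact h3
      · exact absurd h3 (ne_of_gt hKt)
  rw [hq2]
  linarith
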